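/- Let d ≥ 1. There exists a constant C > 0, depending only on d, such that for every integer k ≥ 1 the number of points of ℤ^d that are k-near to 0 is at most C·k. -/

import Mathlib

open Set Metric MeasureTheory ENNReal

noncomputable section

/-- The integer lattice `ℤ^d` as a subset of `ℝ^d`. -/
def intLattice (d : ℕ) : Set (EuclideanSpace ℝ (Fin d)) :=
  {x | ∀ i, ∃ n : ℤ, x i = (n : ℝ)}

/-- The canonical embedding of integer vectors into `ℝ^d`. -/
def toEuc (d : ℕ) (a : Fin d → ℤ) : EuclideanSpace ℝ (Fin d) :=
  WithLp.toLp 2 (fun i => (a i : ℝ))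

/-- The `k`-th Brillouin zone of `a` in `A`: points `x` such that at most `k-1` points of
`A \ {a}` are strictly closer to `x` than `a`, and at least `k-1` points of `A \ {a}` are
at distance at most `dist x a` from `x`. -/
def brillouinZone (d k : ℕ) (A : Set (EuclideanSpace ℝ (Fin d)))
    (a : EuclideanSpace ℝ (Fin d)) : Set (EuclideanSpace ℝ (Fin d)) :=
  {x | {p | p ∈ A \ {a} ∧ dist x p < dist x a}.encard ≤ ((k - 1 : ℕ) : ℕ∞) ∧
       ((k - 1 : ℕ) : ℕ∞) ≤ {p | p ∈ A \ {a} ∧ dist x p ≤ dist x a}.encard}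

/-- The set of points with exactly `k-1` points of `A \ {a}` strictly closer than `a` and
no point of `A \ {a}` at exactly distance `dist x a`; its connected components are the
chambers of the `k`-th Brillouin zone. -/
def chamberRegion (d k : ℕ) (A : Set (EuclideanSpace ℝ (Fin d)))
    (a : EuclideanSpace ℝ (Fin d)) : Set (EuclideanSpace ℝ (Fin d)) :=
  {x | {p | p ∈ A \ {a} ∧ dist x p < dist x a}.encard = ((k - 1 : ℕ) : ℕ∞) ∧
       ∀ p ∈ A \ {a}, dist x p ≠ dist x a}

/-- The chambers of the `k`-th Brillouin zone of `a` in `A`. -/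
def chambers (d k : ℕ) (A : Set (EuclideanSpace ℝ (Fin d)))
    (a : EuclideanSpace ℝ (Fin d)) : Set (Set (EuclideanSpace ℝ (Fin d))) :=
  {C | ∃ x ∈ chamberRegion d k A a, C = connectedComponentIn (chamberRegion d k A a) x}

/-- `ν_d`, the volume of the unit ball in `ℝ^d`. -/
def unitBallVol (d : ℕ) : ℝ := Real.pi ^ ((d : ℝ) / 2) / Real.Gamma ((d : ℝ) / 2 + 1)

/-- A point `b` of `ℤ^d` is `k`-near to `0` if there is a closed ball with `0` on its
boundary, `b` in its interior, and at most `k-1` points of `ℤ^d` in its interior. -/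
def kNear (d k : ℕ) (b : EuclideanSpace ℝ (Fin d)) : Prop :=
  ∃ (c : EuclideanSpace ℝ (Fin d)) (r : ℝ), ‖c‖ = r ∧ dist b c < r ∧
    {p | p ∈ intLattice d ∧ dist p c < r}.encard ≤ ((k - 1 : ℕ) : ℕ∞)

lemma toEuc_injective (d : ℕ) : Function.Injective (toEuc d) := by
  intro a b h
  funext i
  have h' : ((a i : ℝ)) = (b i : ℝ) := congrArg (fun v : EuclideanSpace ℝ (Fin d) => v i) h
  exact_mod_cast h'

lemma toEuc_mem (d : ℕ) (a : Fin d → ℤ) : toEuc d a ∈ intLattice d :=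
  fun i => ⟨a i, rfl⟩

lemma abs_coord_le_norm {d : ℕ} (x : EuclideanSpace ℝ (Fin d)) (i : Fin d) :
    |x i| ≤ ‖x‖ := by
  rw [EuclideanSpace.norm_eq, ← Real.sqrt_sq_eq_abs]
  apply Real.sqrt_le_sqrt
  have h : (x i) ^ 2 = ‖x i‖ ^ 2 := by rw [Real.norm_eq_abs, sq_abs]
  rw [h]
  exact Finset.single_le_sum (fun j _ => sq_nonneg ‖x j‖) (Finset.mem_univ i)

lemma dist_le_of_coord {d : ℕ} (x y : EuclideanSpace ℝ (Fin d)) (s : ℝ) (hs : 0 ≤ s)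
    (h : ∀ i, |x i - y i| ≤ s) : dist x y ≤ Real.sqrt d * s := by
  rw [EuclideanSpace.dist_eq]
  have he : Real.sqrt d * s = Real.sqrt (d * s ^ 2) := by
    rw [Real.sqrt_mul (by positivity), Real.sqrt_sq hs]
  rw [he]
  apply Real.sqrt_le_sqrt
  calc ∑ i, dist (x i) (y i) ^ 2 ≤ ∑ _i : Fin d, s ^ 2 := by
        apply Finset.sum_le_sum
        intro i _
        rw [Real.dist_eq]
        exact pow_le_pow_left₀ (abs_nonneg _) (h i) 2
    _ = d * s ^ 2 := by simp [Finset.sum_const, Finset.card_univ]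

lemma count_upper (d : ℕ) (M : ℕ) :
    {b : EuclideanSpace ℝ (Fin d) | b ∈ intLattice d ∧ ∀ i, |b i| ≤ (M : ℝ)}.encard
      ≤ (((2 * M + 1) ^ d : ℕ) : ℕ∞) := by
  classical
  set F := Fintype.piFinset (fun _ : Fin d => Finset.Icc (-(M : ℤ)) M) with hF
  have hsub : {b : EuclideanSpace ℝ (Fin d) | b ∈ intLattice d ∧ ∀ i, |b i| ≤ (M : ℝ)}
      ⊆ toEuc d '' (F : Set (Fin d → ℤ)) := by
    rintro b ⟨hb, hM⟩
    choose n hn using hb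
    refine ⟨n, ?_, ?_⟩
    · rw [Finset.mem_coe, hF, Fintype.mem_piFinset]
      intro i
      rw [Finset.mem_Icc]
      have h2 : |(n i : ℝ)| ≤ (M : ℝ) := by rw [← hn i]; exact hM i
      have h3 : |n i| ≤ (M : ℤ) := by exact_mod_cast h2
      exact abs_le.1 h3
    · ext i
      exact (hn i).symm
  have hcard : F.card = (2 * M + 1) ^ d := by
    rw [hF, Fintype.card_piFinset]
    have h : (Finset.Icc (-(M : ℤ)) M).card = 2 * M + 1 := by
      rw [Int.card_Icc]; omega
    simp [h]
  calc {b : EuclideanSpace ℝ (Fin d) | b ∈ intLattice d ∧ ∀ i, |b i| ≤ (M : ℝ)}.encard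
      ≤ (toEuc d '' (F : Set (Fin d → ℤ))).encard := Set.encard_mono hsub
    _ = (F : Set (Fin d → ℤ)).encard := (toEuc_injective d).encard_image _
    _ = (F.card : ℕ∞) := Set.encard_coe_eq_coe_finsetCard F
    _ = (((2 * M + 1) ^ d : ℕ) : ℕ∞) := by rw [hcard]

lemma count_lower (d : ℕ) (c : EuclideanSpace ℝ (Fin d)) (r s : ℝ)
    (hds : Real.sqrt d * s < r) (m : ℕ) (hm1 : 1 ≤ m) (hm : (m : ℝ) ≤ s) :
    ((m ^ d : ℕ) : ℕ∞) ≤ {p | p ∈ intLattice d ∧ dist p c < r}.encard := by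
  classical
  set F := Fintype.piFinset (fun i : Fin d => Finset.Icc (⌈c i⌉) (⌈c i⌉ + ((m : ℤ) - 1)))
    with hF
  have hs0 : (0 : ℝ) ≤ s := le_trans (by positivity) hm
  have hsub : toEuc d '' (F : Set (Fin d → ℤ)) ⊆ {p | p ∈ intLattice d ∧ dist p c < r} := by
    rintro _ ⟨a, ha, rfl⟩
    refine ⟨toEuc_mem d a, ?_⟩
    have hcoord : ∀ i, |toEuc d a i - c i| ≤ s := by
      intro i
      have hmem : a i ∈ Finset.Icc (⌈c i⌉) (⌈c i⌉ + ((m : ℤ) - 1)) := by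
        rw [Finset.mem_coe, hF, Fintype.mem_piFinset] at ha
        exact ha i
      rw [Finset.mem_Icc] at hmem
      have h1 : c i ≤ (a i : ℝ) := le_trans (Int.le_ceil _) (Int.cast_le.mpr hmem.1)
      have h2 : (a i : ℝ) ≤ c i + m := by
        have ha2 : (a i : ℝ) ≤ (⌈c i⌉ : ℝ) + ((m : ℝ) - 1) := by exact_mod_cast hmem.2
        have hc1 : (⌈c i⌉ : ℝ) < c i + 1 := Int.ceil_lt_add_one (c i)
        linarith
      have : |(a i : ℝ) - c i| ≤ s := by
        rw [abs_le]
        constructor <;> [linarith; linarith]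
      exact this
    calc dist (toEuc d a) c ≤ Real.sqrt d * s := dist_le_of_coord _ _ s hs0 hcoord
      _ < r := hds
  have hcard : F.card = m ^ d := by
    rw [hF, Fintype.card_piFinset]
    have h : ∀ i : Fin d, (Finset.Icc (⌈c i⌉) (⌈c i⌉ + ((m : ℤ) - 1))).card = m := by
      intro i; rw [Int.card_Icc]; omega
    simp [h]
  calc ((m ^ d : ℕ) : ℕ∞) = (F.card : ℕ∞) := by rw [hcard]
    _ = (F : Set (Fin d → ℤ)).encard := (Set.encard_coe_eq_coe_finsetCard F).symm
    _ = (toEuc d '' (F : Set (Fin d → ℤ))).encard := ((toEuc_injective d).encard_image _).symm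
    _ ≤ _ := Set.encard_mono hsub

/-- There is a constant `C > 0`, depending only on `d`, such that for every
`k ≥ 1` the number of points of `ℤ^d` that are `k`-near to `0` is at most `C·k`. -/
theorem near_points_bound (d : ℕ) (hd : 1 ≤ d) :
    ∃ C > (0 : ℝ), ∀ k : ℕ, 1 ≤ k →
      (({b | b ∈ intLattice d ∧ kNear d k b}.encard : ℝ≥0∞))
        ≤ ENNReal.ofReal (C * k) := by
  have hsd : (1 : ℝ) ≤ Real.sqrt d := by
    rw [show (1 : ℝ) = Real.sqrt 1 by simp]
    exact Real.sqrt_le_sqrt (by exact_mod_cast hd)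
  set A : ℝ := (4 * Real.sqrt d) ^ d with hA
  have hA1 : (1 : ℝ) ≤ A := one_le_pow₀ (by linarith)
  refine ⟨5 ^ d * A, by positivity, ?_⟩
  intro k hk
  have hk1 : (1 : ℝ) ≤ (k : ℝ) := by exact_mod_cast hk
  set x : ℝ := (A * k) ^ ((d : ℝ)⁻¹) with hx
  have hAk1 : (1 : ℝ) ≤ A * k := by nlinarith
  have hx1 : (1 : ℝ) ≤ x := Real.one_le_rpow hAk1 (by positivity)
  have hxd : x ^ d = A * k := Real.rpow_inv_natCast_pow (by linarith) (by omega)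
  have hfl0 : (0 : ℤ) ≤ ⌊2 * x⌋ := by
    apply Int.le_floor.2; push_cast; linarith
  set M : ℕ := (⌊2 * x⌋).toNat with hM
  have hMx : (M : ℝ) ≤ 2 * x := by
    have h1 : ((M : ℤ) : ℝ) ≤ 2 * x := by
      rw [hM, Int.toNat_of_nonneg hfl0]
      exact Int.floor_le _
    exact_mod_cast h1
  have hsub : {b | b ∈ intLattice d ∧ kNear d k b}
      ⊆ {b : EuclideanSpace ℝ (Fin d) | b ∈ intLattice d ∧ ∀ i, |b i| ≤ (M : ℝ)} := by
    rintro b ⟨hb, c, r, hcr, hbc, hP⟩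
    have hr0 : (0 : ℝ) < r := lt_of_le_of_lt dist_nonneg hbc
    have hsd0 : (0 : ℝ) < Real.sqrt d := by linarith
    set s : ℝ := r / (2 * Real.sqrt d) with hs
    have hs0 : (0 : ℝ) < s := by positivity
    have hseq : Real.sqrt d * s = r / 2 := by
      rw [hs]; field_simp
    have hdsr : Real.sqrt d * s < r := by rw [hseq]; linarith
    have hrs : r = 2 * Real.sqrt d * s := by rw [hs]; field_simp
    have hrd : r ^ d ≤ A * k := by
      by_cases hcase : s < 1
      · have hr2 : r < 2 * Real.sqrt d := by
          rw [hrs]; nlinarith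
        have h2d : (2 * Real.sqrt d) ^ d ≤ A := by
          rw [hA]; exact pow_le_pow_left₀ (by positivity) (by linarith) d
        calc r ^ d ≤ (2 * Real.sqrt d) ^ d := pow_le_pow_left₀ hr0.le hr2.le d
          _ ≤ A := h2d
          _ ≤ A * k := le_mul_of_one_le_right (by linarith) hk1
      · push_neg at hcase
        have h1z : (1 : ℤ) ≤ ⌊s⌋ := Int.le_floor.2 (by exact_mod_cast hcase)
        set m : ℕ := (⌊s⌋).toNat with hm
        have hm1 : 1 ≤ m := by rw [hm]; omega
        have hmz : ((m : ℤ)) = ⌊s⌋ := by rw [hm]; exact Int.toNat_of_nonneg (by omega)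
        have hmle : (m : ℝ) ≤ s := by
          have : ((m : ℤ) : ℝ) ≤ s := by rw [hmz]; exact Int.floor_le s
          exact_mod_cast this
        have hlow := count_lower d c r s hdsr m hm1 hmle
        have hcc : ((m ^ d : ℕ) : ℕ∞) ≤ ((k - 1 : ℕ) : ℕ∞) := le_trans hlow hP
        have hmk : m ^ d ≤ k := le_trans (by exact_mod_cast hcc) (Nat.sub_le _ _)
        have hmkR : ((m : ℝ)) ^ d ≤ (k : ℝ) := by exact_mod_cast hmk
        have hsm : s ≤ 2 * m := by
          have h2 : s < (⌊s⌋ : ℝ) + 1 := Int.lt_floor_add_one s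
          have h3 : ((⌊s⌋ : ℤ) : ℝ) = (m : ℝ) := by rw [← hmz]; push_cast; ring
          have h4 : (1 : ℝ) ≤ (m : ℝ) := by exact_mod_cast hm1
          linarith
        calc r ^ d = (2 * Real.sqrt d) ^ d * s ^ d := by rw [hrs, mul_pow]
          _ ≤ (2 * Real.sqrt d) ^ d * (2 * (m : ℝ)) ^ d := by
              exact mul_le_mul_of_nonneg_left (pow_le_pow_left₀ hs0.le hsm d) (by positivity)
          _ = (4 * Real.sqrt d) ^ d * (m : ℝ) ^ d := by
              rw [show (4:ℝ) = 2 * 2 by norm_num, mul_pow, mul_pow, mul_pow, mul_pow]; ring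
          _ ≤ A * k := by rw [hA]; exact mul_le_mul_of_nonneg_left hmkR (by positivity)
    have hrx : r ≤ x := by
      have h1 : r ^ d ≤ x ^ d := by rw [hxd]; exact hrd
      exact (pow_le_pow_iff_left₀ hr0.le (by linarith) (by omega)).1 h1
    have hbn : ‖b‖ < 2 * x := by
      have h1 : ‖b‖ ≤ dist b c + ‖c‖ := by
        rw [← dist_zero_right b, ← dist_zero_right c]
        exact dist_triangle b c 0
      rw [hcr] at h1
      linarith
    refine ⟨hb, fun i => ?_⟩
    obtain ⟨n, hn⟩ := hb i
    have habs : |b i| ≤ ‖b‖ := abs_coord_le_norm b i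
    have hni : |(n : ℝ)| ≤ 2 * x := by rw [← hn]; linarith
    have hnf : |n| ≤ ⌊2 * x⌋ := Int.le_floor.2 (by exact_mod_cast hni)
    rw [hn]
    have h5 : ((|n| : ℤ) : ℝ) ≤ ((M : ℤ) : ℝ) := by
      rw [hM, Int.toNat_of_nonneg hfl0]
      exact_mod_cast hnf
    calc |(n : ℝ)| = ((|n| : ℤ) : ℝ) := by push_cast; ring
      _ ≤ (M : ℝ) := by exact_mod_cast h5
  have h1 : {b | b ∈ intLattice d ∧ kNear d k b}.encard ≤ (((2 * M + 1) ^ d : ℕ) : ℕ∞) :=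
    le_trans (Set.encard_mono hsub) (count_upper d M)
  calc (({b | b ∈ intLattice d ∧ kNear d k b}.encard : ℝ≥0∞))
      ≤ ((((2 * M + 1) ^ d : ℕ) : ℕ∞) : ℝ≥0∞) := ENat.toENNReal_le.2 h1
    _ = ENNReal.ofReal (((2 * M + 1) ^ d : ℕ) : ℝ) := by
        rw [ENNReal.ofReal_natCast]; exact_mod_cast rfl
    _ ≤ ENNReal.ofReal (5 ^ d * A * k) := by
        apply ENNReal.ofReal_le_ofReal
        have h2 : ((2 * M + 1 : ℕ) : ℝ) ≤ 5 * x := by push_cast; linarith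
        calc (((2 * M + 1) ^ d : ℕ) : ℝ) = ((2 * M + 1 : ℕ) : ℝ) ^ d := by push_cast; ring
          _ ≤ (5 * x) ^ d := pow_le_pow_left₀ (by positivity) h2 d
          _ = 5 ^ d * (A * k) := by rw [mul_pow, hxd]
          _ = 5 ^ d * A * k := by ring
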